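/- For all positive integers n, r, s: W_{n+r}·W_{n+s} − W_n·W_{n+r+s} = (−q)^n·u_r·(U_1·U_s − U_0·U_{s+1})·(w_1² − p·w_1·w_0 − q·w_0²). -/

import Mathlib

open Quaternion

section aux

variable {p q : ℝ} {w u : ℕ → ℝ}

lemma auxL1 (hw : ∀ n, w (n + 2) = p * w (n + 1) + q * w n) :
    ∀ N, w (N+1)^2 - p * w (N+1) * w N - q * w N^2
      = (-q)^N * (w 1^2 - p * w 1 * w 0 - q * w 0^2) := by
  intro N
  induction N with
  | zero => ring_nf
  | succ N ih =>
      linear_combination (norm := ring_nf) (-q) * ih + (w (N+2) + q * w N) * hw N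

lemma auxUid (hu : ∀ n, u (n + 2) = p * u (n + 1) + q * u n)
    (hu0 : u 0 = 0) (hu1 : u 1 = 1) :
    ∀ S, u 2 * u (S+1) - u 1 * u (S+2) = -q * u S := by
  intro S
  linear_combination (norm := ring_nf)
    u (S+1) * hu 0 - u 1 * hu S - q * u S * hu1 + q * u (S+1) * hu0

lemma auxC (hw : ∀ n, w (n + 2) = p * w (n + 1) + q * w n)
    (hu : ∀ n, u (n + 2) = p * u (n + 1) + q * u n)
    (hu0 : u 0 = 0) (hu1 : u 1 = 1) :
    ∀ S N, w (N+2) * w (N+S+2) - w (N+1) * w (N+S+3)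
      = (-q)^(N+1) * u (S+1) * (w 1^2 - p * w 1 * w 0 - q * w 0^2) := by
  intro S
  induction S using Nat.twoStepInduction with
  | zero =>
      intro N
      linear_combination (norm := ring_nf) auxL1 hw (N+1) - w (N+1) * hw (N+1)
        - ((-q)^(N+1) * (w 1^2 - p * w 1 * w 0 - q * w 0^2)) * hu1
  | one =>
      intro N
      linear_combination (norm := ring_nf) p * auxL1 hw (N+1)
        + (w (N+2) - p * w (N+1)) * hw (N+1) - w (N+1) * hw (N+2)
        - ((-q)^(N+1) * (w 1^2 - p * w 1 * w 0 - q * w 0^2)) * hu 0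
        - ((-q)^(N+1) * (w 1^2 - p * w 1 * w 0 - q * w 0^2) * p) * hu1
        - ((-q)^(N+1) * (w 1^2 - p * w 1 * w 0 - q * w 0^2) * q) * hu0
  | more S ih ih1 =>
      intro N
      linear_combination (norm := ring_nf) p * ih1 N + q * ih N
        + w (N+2) * hw (N+S+2) - w (N+1) * hw (N+S+3)
        - ((-q)^(N+1) * (w 1^2 - p * w 1 * w 0 - q * w 0^2)) * hu (S+1)

lemma auxMS (hw : ∀ n, w (n + 2) = p * w (n + 1) + q * w n)
    (hu : ∀ n, u (n + 2) = p * u (n + 1) + q * u n)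
    (hu0 : u 0 = 0) (hu1 : u 1 = 1) :
    ∀ r S N, w (N+r+1) * w (N+S+2) - w (N+1) * w (N+r+S+2)
      = (-q)^(N+1) * u r * u (S+1) * (w 1^2 - p * w 1 * w 0 - q * w 0^2) := by
  intro r
  induction r using Nat.twoStepInduction with
  | zero =>
      intro S N
      linear_combination (norm := ring_nf)
        (-((-q)^(N+1) * (w 1^2 - p * w 1 * w 0 - q * w 0^2) * u (S+1))) * hu0
  | one =>
      intro S N
      linear_combination (norm := ring_nf) auxC hw hu hu0 hu1 S N
        - ((-q)^(N+1) * u (S+1) * (w 1^2 - p * w 1 * w 0 - q * w 0^2)) * hu1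
  | more r ih ih1 =>
      intro S N
      linear_combination (norm := ring_nf) p * ih1 S N + q * ih S N
        + w (N+S+2) * hw (N+r+1) - w (N+1) * hw (N+r+S+2)
        - ((-q)^(N+1) * u (S+1) * (w 1^2 - p * w 1 * w 0 - q * w 0^2)) * hu r

lemma auxM (hw : ∀ n, w (n + 2) = p * w (n + 1) + q * w n)
    (hu : ∀ n, u (n + 2) = p * u (n + 1) + q * u n)
    (hu0 : u 0 = 0) (hu1 : u 1 = 1) :
    ∀ a r S N, w (N+r+a+1) * w (N+S+2) - w (N+a+1) * w (N+r+S+2)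
      = (-q)^(N+1) * u r * (u (a+1) * u (S+1) - u a * u (S+2))
          * (w 1^2 - p * w 1 * w 0 - q * w 0^2) := by
  intro a
  induction a using Nat.twoStepInduction with
  | zero =>
      intro r S N
      linear_combination (norm := ring_nf) auxMS hw hu hu0 hu1 r S N
        - ((-q)^(N+1) * (w 1^2 - p * w 1 * w 0 - q * w 0^2) * u r * u (S+1)) * hu1
        + ((-q)^(N+1) * (w 1^2 - p * w 1 * w 0 - q * w 0^2) * u r * u (S+2)) * hu0
  | one =>
      intro r S N
      cases S with
      | zero => ring_nf
      | succ S' =>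
          linear_combination (norm := ring_nf) auxMS hw hu hu0 hu1 r S' (N+1)
            - ((-q)^(N+1) * (w 1^2 - p * w 1 * w 0 - q * w 0^2) * u r)
              * auxUid hu hu0 hu1 (S'+1)
  | more a ih ih1 =>
      intro r S N
      linear_combination (norm := ring_nf) p * ih1 r S N + q * ih r S N
        + w (N+S+2) * hw (N+r+a+1) - w (N+r+S+2) * hw (N+a+1)
        - ((-q)^(N+1) * u r * u (S+1) * (w 1^2 - p * w 1 * w 0 - q * w 0^2)) * hu (a+1)
        + ((-q)^(N+1) * u r * u (S+2) * (w 1^2 - p * w 1 * w 0 - q * w 0^2)) * hu a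

end aux

theorem stmt12 (p q : ℝ) (w : ℕ → ℝ) (hw : ∀ n, w (n + 2) = p * w (n + 1) + q * w n)
    (W : ℕ → ℍ[ℝ]) (hW : ∀ n, W n = ⟨w n, w (n + 1), w (n + 2), w (n + 3)⟩)
    (u : ℕ → ℝ) (hu : ∀ n, u (n + 2) = p * u (n + 1) + q * u n)
    (hu0 : u 0 = 0) (hu1 : u 1 = 1)
    (U : ℕ → ℍ[ℝ]) (hU : ∀ n, U n = ⟨u n, u (n + 1), u (n + 2), u (n + 3)⟩)
    (n r s : ℕ) (hn : 1 ≤ n) (hr : 1 ≤ r) (hs : 1 ≤ s) :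
    W (n + r) * W (n + s) - W n * W (n + r + s) =
      ((-q) ^ n * u r * (w 1 ^ 2 - p * w 1 * w 0 - q * w 0 ^ 2)) •
        (U 1 * U s - U 0 * U (s + 1)) := by
  obtain ⟨N, rfl⟩ : ∃ N, n = N + 1 := ⟨n - 1, by omega⟩
  obtain ⟨S, rfl⟩ : ∃ S, s = S + 1 := ⟨s - 1, by omega⟩
  have M := auxM hw hu hu0 hu1
  rw [Quaternion.ext_iff]
  refine ⟨?_, ?_, ?_, ?_⟩ <;>
    simp only [Quaternion.re_mul, Quaternion.imI_mul, Quaternion.imJ_mul, Quaternion.imK_mul,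
      Quaternion.re_sub, Quaternion.imI_sub, Quaternion.imJ_sub, Quaternion.imK_sub,
      Quaternion.re_smul, Quaternion.imI_smul, Quaternion.imJ_smul, Quaternion.imK_smul,
      smul_eq_mul] <;>
    simp only [hW, hU]
  · linear_combination (norm := ring_nf)
      M 0 r S N - M 1 r (S+1) N - M 2 r (S+2) N - M 3 r (S+3) N
  · linear_combination (norm := ring_nf)
      M 0 r (S+1) N + M 1 r S N + M 2 r (S+3) N - M 3 r (S+2) N
  · linear_combination (norm := ring_nf)
      M 0 r (S+2) N - M 1 r (S+3) N + M 2 r S N + M 3 r (S+1) N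
  · linear_combination (norm := ring_nf)
      M 0 r (S+3) N + M 1 r (S+2) N - M 2 r (S+1) N + M 3 r S N
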